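/- Let λ < κ be cardinals with u(κ) < u(λ). Then every uniform ultrafilter U over κ with χ(U) = u(κ) is λ-indecomposable. -/
import Mathlib


open Cardinal Set

universe u v

/-- An ultrafilter is uniform if all of its members have full cardinality. -/
def Uniform {α : Type u} (U : Ultrafilter α) : Prop := ∀ X ∈ U, #X = #α

/-- An ultrafilter `U` over `S` is `l`-decomposable if there is `f : S → l`
such that preimages of sets of size `< l` are not in `U`. -/
def Decomposable {S : Type u} (U : Ultrafilter S) (l : Cardinal.{v}) : Prop :=
  ∃ f : S → l.out, ∀ X : Set l.out, #X < l → f ⁻¹' X ∉ U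

/-- The character of an ultrafilter: the least cardinality of a base. -/
noncomputable def charU {α : Type u} (U : Ultrafilter α) : Cardinal.{u} :=
  sInf {c | ∃ B : Set (Set α), #B = c ∧ (∀ X ∈ B, X ∈ U) ∧ ∀ Y ∈ U, ∃ X ∈ B, X ⊆ Y}

/-- The ultrafilter number at a cardinal `κ`: the minimal character of a
uniform ultrafilter over (a set of size) `κ`. -/
noncomputable def uNumber (κ : Cardinal.{u}) : Cardinal.{u} :=
  sInf {c | ∃ U : Ultrafilter κ.out, Uniform U ∧ charU U = c}

/-- If `λ < κ` and `u(κ) < u(λ)`, every uniform ultrafilter over `κ`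
of minimal character is `λ`-indecomposable. -/
theorem stmt7 (l κ : Cardinal.{u}) (h : l < κ) (hu : uNumber κ < uNumber l)
    (U : Ultrafilter κ.out) (hUu : Uniform U) (hchi : charU U = uNumber κ) :
    ¬ Decomposable U l := by
  rintro ⟨f, hf⟩
  set V : Ultrafilter l.out := U.map f with hV
  -- V is uniform
  have hVu : Uniform V := by
    intro X hX
    have hXle : #X ≤ #l.out := mk_set_le X
    rw [mk_out] at hXle ⊢
    refine le_antisymm hXle (not_lt.mp fun hlt => ?_)
    exact hf X hlt (Ultrafilter.mem_map.mp hX)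
  -- a base of U of minimal cardinality
  have hne : {c | ∃ B : Set (Set κ.out), #B = c ∧ (∀ X ∈ B, X ∈ U) ∧
      ∀ Y ∈ U, ∃ X ∈ B, X ⊆ Y}.Nonempty :=
    ⟨#{X | X ∈ U}, {X | X ∈ U}, rfl, fun X hX => hX, fun Y hY => ⟨Y, hY, subset_rfl⟩⟩
  obtain ⟨B, hB, hBU, hBbase⟩ := csInf_mem hne
  -- the image base for V
  have hmem : #((fun X => f '' X) '' B) ∈ {c | ∃ B' : Set (Set l.out), #B' = c ∧
      (∀ X ∈ B', X ∈ V) ∧ ∀ Y ∈ V, ∃ X ∈ B', X ⊆ Y} := by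
    refine ⟨(fun X => f '' X) '' B, rfl, ?_, ?_⟩
    · rintro _ ⟨X, hX, rfl⟩
      exact Ultrafilter.mem_map.mpr (U.mem_of_superset (hBU X hX) (subset_preimage_image f X))
    · intro Y hY
      obtain ⟨X, hX, hXY⟩ := hBbase _ (Ultrafilter.mem_map.mp hY)
      exact ⟨f '' X, mem_image_of_mem _ hX, image_subset_iff.mpr hXY⟩
  have hVle : charU V ≤ charU U := by
    calc charU V ≤ #((fun X => f '' X) '' B) := csInf_le' hmem
    _ ≤ #B := mk_image_le
    _ = charU U := hB
  have hul : uNumber l ≤ charU V := csInf_le' ⟨V, hVu, rfl⟩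
  exact absurd (hul.trans (hVle.trans_eq hchi)) (not_le.mpr hu)
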